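/- Let S be a set, Λ a totally ordered index set, and (P_λ)_{λ∈Λ} a family of maps S → S. For s ∈ S let Supp(s) = {λ : P_λ(s) ≠ s}. Assume: (1) Supp(s) is finite for all s; (2) if λ is the least element of Supp(s), then Supp(P_λ(s)) ⊆ Supp(s) \ {λ}. Then for any finite subset F ⊆ Λ containing Supp(s), the composite P_F(s) (applying the P_λ for λ ∈ F in increasing order) has empty support, i.e. every P_μ fixes P_F(s). -/

import Mathlib

/-- Apply the maps `P a` for `a` in the list, in list order (head first). -/
def applySorted {S Λ : Type*} (P : Λ → S → S) : List Λ → S → S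
  | [], s => s
  | a :: l, s => applySorted P l (P a s)

/-- The support of `s`: the indices `lam` such that `P lam` does not fix `s`. -/
def Supp {S Λ : Type*} (P : Λ → S → S) (s : S) : Set Λ := {lam | P lam s ≠ s}

theorem aux2 {S Λ : Type*} [LinearOrder Λ] (P : Λ → S → S)
    (hleast : ∀ s lam, IsLeast (Supp P s) lam → Supp P (P lam s) ⊆ Supp P s \ {lam}) :
    ∀ (l : List Λ), l.Pairwise (· ≤ ·) → ∀ s : S, (Supp P s ⊆ {x | x ∈ l}) →
      Supp P (applySorted P l s) = ∅ := by
  intro l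
  induction l with
  | nil =>
    intro _ s hs
    simp only [applySorted]
    ext x
    simp only [Set.mem_empty_iff_false, iff_false]
    intro hx
    simpa using hs hx
  | cons a l ih =>
    intro hsort s hs
    simp only [applySorted]
    by_cases ha : a ∈ Supp P s
    · have hle : IsLeast (Supp P s) a := by
        refine ⟨ha, fun b hb => ?_⟩
        rcases List.mem_cons.mp (hs hb) with h | h
        · exact le_of_eq h.symm
        · exact (List.pairwise_cons.mp hsort).1 b h
      refine ih (List.pairwise_cons.mp hsort).2 _ fun x hx => ?_
      have := hleast s a hle hx
      rcases List.mem_cons.mp (hs this.1) with h | h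
      · exact absurd h this.2
      · exact h
    · have heq : P a s = s := not_not.mp ha
      rw [heq]
      refine ih (List.pairwise_cons.mp hsort).2 _ fun x hx => ?_
      rcases List.mem_cons.mp (hs hx) with h | h
      · exact absurd (h ▸ hx) ha
      · exact h

/-- If supports are finite, and applying the map indexed by the least element of the support
strictly shrinks the support, then applying the maps indexed by any finite set `F` containing
the support of `s`, in increasing order, yields a point with empty support. -/
theorem stmt2 {S Λ : Type*} [LinearOrder Λ] (P : Λ → S → S)
    (hfin : ∀ s, (Supp P s).Finite)
    (hleast : ∀ s lam, IsLeast (Supp P s) lam → Supp P (P lam s) ⊆ Supp P s \ {lam})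
    (s : S) (F : Finset Λ) (hF : Supp P s ⊆ ↑F) :
    Supp P (applySorted P (F.sort (· ≤ ·)) s) = ∅ := by
  refine aux2 P hleast _ (Finset.pairwise_sort _ _) s fun x hx => ?_
  simpa [Finset.mem_sort] using hF hx
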